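/- Let K be a field of characteristic not 2, and let f(x,y) = ax³ + bx²y + cxy² + dy³ ∈ K[x,y] with a·d ≠ 0. Then the pair of symmetric matrices (A,B) with A = [[-a,0,0],[0,0,1/2],[0,1/2,b/(4ad)]] and B = [[0,0,1/2],[0,d,0],[1/2,0,-c/(4ad)]] satisfies 4·det(xA - yB) = f(x,y). -/

import Mathlib

/-- The explicit pair of symmetric matrices representing the Δ-distinguished
orbit has resolvent `4 det(xA - yB) = ax³ + bx²y + cxy² + dy³`. -/
theorem delta_distinguished_resolvent {K : Type*} [Field K] (h2 : (2 : K) ≠ 0)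
    (a b c d : K) (ha : a ≠ 0) (hd : d ≠ 0) :
    ∀ x y : K,
      4 * Matrix.det
          (x • !![-a, 0, 0; 0, 0, 1 / 2; 0, 1 / 2, b / (4 * a * d)]
            - y • !![0, 0, 1 / 2; 0, d, 0; 1 / 2, 0, -c / (4 * a * d)])
        = a * x ^ 3 + b * x ^ 2 * y + c * x * y ^ 2 + d * y ^ 3 := by
  intro x y
  have h4 : (4 : K) ≠ 0 := by
    have : (4 : K) = 2 * 2 := by norm_num
    rw [this]; exact mul_ne_zero h2 h2
  simp only [Matrix.smul_of, Matrix.smul_cons, smul_eq_mul, Matrix.smul_empty,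
    Matrix.sub_apply, Matrix.det_fin_three, Matrix.of_apply, Matrix.cons_val',
    Matrix.cons_val_zero, Matrix.cons_val_one, Matrix.head_cons, Matrix.head_fin_const,
    Matrix.empty_val', Matrix.cons_val_fin_one, Matrix.cons_val_two, Matrix.tail_cons]
  have h64 : (64 : K) ≠ 0 := by
    have : (64 : K) = 2 ^ 6 := by norm_num
    rw [this]; exact pow_ne_zero _ h2
  field_simp
  ring_nf
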